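/- Let a_1,...,a_k, b, n be integers with n ≥ 1, and suppose that gcd(∑_{i∈I} a_i, n) = 1 for every nonempty proper subset I of {1,...,k}. If d = gcd(a_1 + ... + a_k, n) divides b, then the number of solutions (x_1,...,x_k) ∈ (Z/nZ)^k of a_1x_1 + ... + a_kx_k ≡ b (mod n) with all x_i pairwise distinct equals (-1)^{k-1}(k-1)!(d-1) + (n-1)(n-2)···(n-k+1). -/

import Mathlib

open Finset

section AUX

lemma count_lin (n : ℕ) [NeZero n] (c b : ℤ) (hb : (Int.gcd c n : ℤ) ∣ b) :
    Nat.card {x : ZMod n // (c : ZMod n) * x = (b : ZMod n)} = Int.gcd c n := by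
  set d := Int.gcd c n with hd
  have hn0 : n ≠ 0 := NeZero.ne n
  have hdn : d ∣ n := by
    have := Int.gcd_dvd_right (a := c) (b := (n:ℤ))
    exact_mod_cast Int.ofNat_dvd.mp (by exact_mod_cast this)
  set f : ZMod n →+ ZMod n := AddMonoidHom.mulLeft ((c:ℤ) : ZMod n) with hf
  have hfapp : ∀ z : ZMod n, f z = ((c:ℤ) : ZMod n) * z := fun z => rfl
  have hrange : f.range = AddSubgroup.zmultiples ((c:ℤ) : ZMod n) := by
    ext x
    simp only [AddMonoidHom.mem_range, AddSubgroup.mem_zmultiples_iff]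
    constructor
    · rintro ⟨y, rfl⟩
      refine ⟨(y.val : ℤ), ?_⟩
      rw [zsmul_eq_mul, hfapp]
      push_cast
      rw [ZMod.natCast_val, ZMod.cast_id]
      ring
    · rintro ⟨k, rfl⟩
      exact ⟨(k : ZMod n), by rw [hfapp, zsmul_eq_mul]; ring⟩
  have horder : addOrderOf ((c:ℤ) : ZMod n) = n / d := by
    rcases Int.natAbs_eq c with h | h
    · rw [h, Int.cast_natCast, ZMod.addOrderOf_coe _ hn0,
        hd, Int.gcd, Int.natAbs_cast, Nat.gcd_comm]
    · rw [h, Int.cast_neg, Int.cast_natCast, addOrderOf_neg, ZMod.addOrderOf_coe _ hn0,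
        hd, Int.gcd, Int.natAbs_cast, Nat.gcd_comm]
  have hcardrange : Nat.card f.range = n / d := by
    rw [hrange, Nat.card_zmultiples, horder]
  have hker : Nat.card f.ker = d := by
    have h1 := AddSubgroup.card_eq_card_quotient_mul_card_addSubgroup (f.ker)
    have h2 : Nat.card (ZMod n ⧸ f.ker) = n / d := by
      rw [Nat.card_congr (QuotientAddGroup.quotientKerEquivRange f).toEquiv, hcardrange]
    rw [h2, Nat.card_zmod] at h1
    have hdpos : 0 < d := Nat.pos_of_dvd_of_pos hdn (Nat.pos_of_ne_zero hn0)
    have hnd : n / d * d = n := Nat.div_mul_cancel hdn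
    have hndpos : 0 < n / d := by
      rcases Nat.eq_zero_or_pos (n / d) with h | h
      · rw [h, zero_mul] at hnd; omega
      · exact h
    have h3 : n / d * d = n / d * Nat.card f.ker := by rw [hnd]; exact h1
    exact (Nat.eq_of_mul_eq_mul_left hndpos h3).symm
  set x₀ : ZMod n := ((Int.gcdA c n * (b / (d:ℤ)) : ℤ) : ZMod n) with hx0def
  have hdb : (d:ℤ) * (b / (d:ℤ)) = b := Int.mul_ediv_cancel' hb
  have hbez := Int.gcd_eq_gcd_ab c n
  have hint : (c * (Int.gcdA c n * (b/(d:ℤ))) : ℤ) = b - n * (Int.gcdB c n * (b/(d:ℤ))) := by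
    linear_combination (b/(d:ℤ)) * hbez.symm + hdb
  have hx0 : ((c:ℤ) : ZMod n) * x₀ = (b : ZMod n) := by
    rw [hx0def]
    have := congrArg (fun z : ℤ => (z : ZMod n)) hint
    push_cast at this ⊢
    rw [ZMod.natCast_self] at this
    simpa using this
  have hequiv : {x : ZMod n // (c : ZMod n) * x = (b : ZMod n)} ≃ f.ker := by
    refine ⟨fun x => ⟨x.1 - x₀, ?_⟩, fun y => ⟨y.1 + x₀, ?_⟩, ?_, ?_⟩
    · have hx := x.2
      rw [AddMonoidHom.mem_ker, hfapp, mul_sub, hx, hx0, sub_self]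
    · have hy := y.2
      rw [AddMonoidHom.mem_ker, hfapp] at hy
      rw [mul_add, hy, hx0, zero_add]
    · intro x; ext; simp
    · intro y; ext; simp
  rw [Nat.card_congr hequiv, hker]
open Finset

lemma card_inj_fun (n m : ℕ) [NeZero n] :
    Nat.card {x : Fin m → ZMod n // Function.Injective x} = n.descFactorial m := by
  rw [Nat.card_eq_fintype_card, Fintype.card_congr (Equiv.subtypeInjectiveEquivEmbedding (Fin m) (ZMod n)),
    Fintype.card_embedding_eq, ZMod.card, Fintype.card_fin]

lemma descFact_prod (n t : ℕ) :
    (n.descFactorial (t+1) : ℤ) = n * ∏ j ∈ range t, ((n : ℤ) - (j + 1)) := by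
  induction t with
  | zero => simp
  | succ t ih =>
    rw [Nat.descFactorial_succ, prod_range_succ, Nat.cast_mul, ih]
    rcases le_or_gt (t+1+1) n with h | h
    · have : ((n - (t+1) : ℕ) : ℤ) = (n : ℤ) - (t+1) := by
        have h2 : t+1 ≤ n := by omega
        push_cast [h2]; ring
      rw [this]; ring
    · -- n ≤ t+1 : both sides zero
      have h1 : n - (t+1) = 0 := by omega
      rw [h1, Nat.cast_zero, zero_mul]
      rcases Nat.eq_zero_or_pos n with h0 | h0
      · rw [h0]; push_cast; ring
      · rcases Nat.lt_or_ge n (t+1) with h2 | h2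
        · have hmem : n - 1 ∈ range t := by simp; omega
          have : ((n:ℤ) - ((n-1 : ℕ) + 1)) = 0 := by
            have : ((n-1:ℕ):ℤ) = (n:ℤ) - 1 := by push_cast [h0]; ring
            rw [this]; ring
          rw [prod_eq_zero hmem this]; ring
        · have : n = t+1 := by omega
          rw [this]; push_cast; ring

lemma inj_snoc_iff {α : Type*} {m : ℕ} (x : Fin (m+1) → α) :
    Function.Injective x ↔ Function.Injective (Fin.init x) ∧
      ∀ j : Fin m, x (Fin.castSucc j) ≠ x (Fin.last m) := by
  constructor
  · intro h
    refine ⟨fun i j hij => ?_, fun j hj => ?_⟩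
    · have := h hij
      exact Fin.castSucc_injective m this
    · have := h hj
      exact absurd this (by simp [Fin.ext_iff]; omega)
  · rintro ⟨h1, h2⟩ i j hij
    induction i using Fin.lastCases with
    | last =>
      induction j using Fin.lastCases with
      | last => rfl
      | cast j => exact absurd hij.symm (h2 j)
    | cast i =>
      induction j using Fin.lastCases with
      | last => exact absurd hij (h2 i)
      | cast j => exact congrArg Fin.castSucc (h1 hij)

lemma unit_of_gcd_one (n : ℕ) [NeZero n] (c : ℤ) (h : Int.gcd c n = 1) :
    IsUnit ((c : ℤ) : ZMod n) := by
  have : IsCoprime c (n : ℤ) := Int.isCoprime_iff_gcd_eq_one.mpr h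
  obtain ⟨u, v, huv⟩ := this
  have := congrArg (fun z : ℤ => (z : ZMod n)) huv
  push_cast at this
  rw [ZMod.natCast_self, mul_zero, add_zero] at this
  exact IsUnit.of_mul_eq_one _ (by rw [mul_comm] at this; exact this)

end AUX

lemma final_arith (n m : ℕ) (hm : 1 ≤ m) (d : ℤ) :
    (n.descFactorial m : ℤ) - (m : ℤ) * ((-1) ^ (m - 1) * (Nat.factorial (m - 1) : ℤ) * (d - 1) +
        ∏ t ∈ Finset.range (m - 1), ((n : ℤ) - (t + 1))) =
      (-1) ^ (m + 1 - 1) * (Nat.factorial (m + 1 - 1) : ℤ) * (d - 1) +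
        ∏ j ∈ Finset.range (m + 1 - 1), ((n : ℤ) - (j + 1)) := by
  obtain ⟨m', rfl⟩ : ∃ m', m = m' + 1 := ⟨m - 1, by omega⟩
  simp only [Nat.add_sub_cancel]
  rw [descFact_prod n m', prod_range_succ, Nat.factorial_succ, pow_succ]
  push_cast
  ring

lemma main_count : ∀ (k n : ℕ), 1 ≤ n → 1 ≤ k → ∀ (a : Fin k → ℤ) (b : ℤ),
    (∀ I : Finset (Fin k), I.Nonempty → I ≠ Finset.univ →
      Int.gcd (∑ i ∈ I, a i) n = 1) →
    ((Int.gcd (∑ i, a i) n : ℤ) ∣ b) →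
    (Nat.card {x : Fin k → ZMod n //
        ∑ i, (a i : ZMod n) * x i = (b : ZMod n) ∧ Function.Injective x} : ℤ) =
      (-1) ^ (k - 1) * (Nat.factorial (k - 1) : ℤ) * ((Int.gcd (∑ i, a i) n : ℤ) - 1) +
        ∏ j ∈ Finset.range (k - 1), ((n : ℤ) - (j + 1)) := by
  intro k
  induction k with
  | zero => intro n hn hk; omega
  | succ m IH =>
    intro n hn _ a b hI hb
    haveI : NeZero n := ⟨by omega⟩
    by_cases hm0 : m = 0
    · -- base case k = 1
      subst hm0
      have hE : {x : Fin 1 → ZMod n //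
          ∑ i, (a i : ZMod n) * x i = (b : ZMod n) ∧ Function.Injective x} ≃
          {x : ZMod n // ((a 0 : ℤ) : ZMod n) * x = (b : ZMod n)} := by
        refine ⟨fun x => ⟨x.1 0, ?_⟩, fun y => ⟨fun _ => y.1, ?_, ?_⟩, ?_, ?_⟩
        · have := x.2.1
          rwa [Fin.sum_univ_one] at this
        · rw [Fin.sum_univ_one]; exact y.2
        · intro i j _; exact Subsingleton.elim i j
        · intro x; ext i; have : i = 0 := Subsingleton.elim i 0; rw [this]
        · intro y; rfl
      rw [Nat.card_congr hE]
      have hb0 : (Int.gcd (a 0) n : ℤ) ∣ b := by rwa [Fin.sum_univ_one] at hb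
      rw [count_lin n (a 0) b hb0, show (∑ i, a i) = a 0 from Fin.sum_univ_one a]
      simp only [Fin.sum_univ_one, pow_zero, Nat.factorial_zero, Nat.cast_one, one_mul,
        Nat.sub_self, Finset.range_zero, Finset.prod_empty]
      ring
    · -- inductive step
      have hm : 1 ≤ m := by omega
      set ℓ : Fin (m+1) := Fin.last m with hldef
      have hgl : Int.gcd (a ℓ) n = 1 := by
        have h1 : ({ℓ} : Finset (Fin (m+1))).Nonempty := ⟨ℓ, mem_singleton_self ℓ⟩
        have h2 : ({ℓ} : Finset (Fin (m+1))) ≠ univ := by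
          intro h
          have h3 : (⟨0, by omega⟩ : Fin (m+1)) ∈ ({ℓ} : Finset (Fin (m+1))) := by
            rw [h]; exact mem_univ _
          rw [mem_singleton] at h3
          have h4 := congrArg Fin.val h3
          simp [hldef] at h4
          omega
        have := hI {ℓ} h1 h2
        rwa [sum_singleton] at this
      obtain ⟨w, hw⟩ := IsUnit.exists_left_inv (unit_of_gcd_one n (a ℓ) hgl)
      have hinit : ∀ (α : Type) (x : Fin (m+1) → α) (i : Fin m),
          Fin.init x i = x i.castSucc := fun _ _ _ => rfl
      set F0 : Finset (Fin (m+1) → ZMod n) :=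
        univ.filter (fun x => (∑ i, (a i : ZMod n) * x i = (b : ZMod n)) ∧
          Function.Injective (Fin.init x)) with hF0
      set Fsol : Finset (Fin (m+1) → ZMod n) :=
        univ.filter (fun x => (∑ i, (a i : ZMod n) * x i = (b : ZMod n)) ∧
          Function.Injective x) with hFsol
      set Fj : Fin m → Finset (Fin (m+1) → ZMod n) :=
        fun j => univ.filter (fun x => (∑ i, (a i : ZMod n) * x i = (b : ZMod n)) ∧
          Function.Injective (Fin.init x) ∧ x (Fin.castSucc j) = x ℓ) with hFj
      have hsum : ∀ x : Fin (m+1) → ZMod n,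
          ∑ i, (a i : ZMod n) * x i =
          (∑ i : Fin m, (a (Fin.castSucc i) : ZMod n) * x (Fin.castSucc i)) +
            (a ℓ : ZMod n) * x ℓ := by
        intro x
        rw [Fin.sum_univ_castSucc]
      -- Claim A
      have claimA : F0.card = n.descFactorial m := by
        have htcard : (univ.filter (fun x' : Fin m → ZMod n => Function.Injective x')).card
            = n.descFactorial m := by
          rw [← Fintype.card_subtype, ← Nat.card_eq_fintype_card, card_inj_fun]
        rw [← htcard]
        apply card_nbij' (fun x => Fin.init x)
          (fun x' => Fin.snoc x' (w * ((b:ZMod n) - ∑ i : Fin m, (a (Fin.castSucc i) : ZMod n) * x' i)))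
        · intro x hx
          beta_reduce
          simp only [mem_coe, hF0, mem_filter] at hx
          rw [mem_coe, mem_filter]
          exact ⟨mem_univ _, hx.2.2⟩
        · intro x' hx'
          beta_reduce
          rw [mem_coe, mem_filter] at hx'
          rw [mem_coe, hF0, mem_filter]
          refine ⟨mem_univ _, ?_, ?_⟩
          · rw [hsum]
            simp only [hldef, Fin.snoc_castSucc, Fin.snoc_last]
            rw [← mul_assoc, mul_comm ((a ℓ : ℤ) : ZMod n) w, hw, one_mul]
            ring
          · rw [Fin.init_snoc]; exact hx'.2
        · intro x hx
          beta_reduce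
          simp only [mem_coe, hF0, mem_filter] at hx
          have hCx := hx.2.1
          rw [hsum] at hCx
          have hbs : (b:ZMod n) - ∑ i : Fin m, (a (Fin.castSucc i) : ZMod n) * (Fin.init x) i
              = (a ℓ : ZMod n) * x ℓ := by
            simp only [hinit]
            rw [← hCx]
            ring
          rw [hbs, ← mul_assoc, hw, one_mul, hldef, Fin.snoc_init_self]
        · intro x' hx'
          beta_reduce
          rw [Fin.init_snoc]
      -- Claim B
      have claimB : F0.card = Fsol.card + ∑ j : Fin m, (Fj j).card := by
        have hsplit := card_filter_add_card_filter_not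
          (s := F0) (p := fun x => Function.Injective x)
        have h1 : F0.filter (fun x => Function.Injective x) = Fsol := by
          ext x
          simp only [hF0, hFsol, mem_filter, mem_univ, true_and, and_assoc, filter_filter]
          constructor
          · rintro ⟨h1, h2, h3⟩; exact ⟨h1, h3⟩
          · rintro ⟨h1, h3⟩
            exact ⟨h1, fun i j hij => Fin.castSucc_injective m (h3 hij), h3⟩
        have h2 : F0.filter (fun x => ¬ Function.Injective x) = univ.biUnion Fj := by
          ext x
          simp only [hF0, hFj, mem_filter, mem_biUnion, mem_univ, true_and, filter_filter]
          constructor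
          · rintro ⟨⟨h1, h2⟩, h3⟩
            rw [inj_snoc_iff] at h3
            push_neg at h3
            obtain ⟨j, hj⟩ := h3 h2
            exact ⟨j, ⟨h1, h2, hj⟩⟩
          · rintro ⟨j, h1, h2, h3⟩
            refine ⟨⟨h1, h2⟩, ?_⟩
            rw [inj_snoc_iff]
            push_neg
            intro _
            exact ⟨j, h3⟩
        have h3 : (univ.biUnion Fj).card = ∑ j : Fin m, (Fj j).card := by
          apply card_biUnion
          intro j _ j' _ hjj'
          show Disjoint (Fj j) (Fj j')
          rw [disjoint_left]
          intro x hx hx'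
          rw [hFj, mem_filter] at hx hx'
          have h4 := hx.2.2.2.trans hx'.2.2.2.symm
          exact hjj' (hx.2.2.1 h4)
        rw [← hsplit, h1, h2, h3]
      -- Claim C
      have claimC : ∀ j : Fin m, ((Fj j).card : ℤ) =
          (-1) ^ (m - 1) * (Nat.factorial (m - 1) : ℤ) *
            ((Int.gcd (∑ i, a i) n : ℤ) - 1) +
          ∏ t ∈ Finset.range (m - 1), ((n : ℤ) - (t + 1)) := by
        intro j
        set a' : Fin m → ℤ := fun i => if i = j then a i.castSucc + a ℓ else a i.castSucc
          with ha'
        have ha'i : ∀ i, a' i = a i.castSucc + (if i = j then a ℓ else 0) := by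
          intro i; by_cases h : i = j <;> simp [ha', h]
        have hsum' : ∀ I : Finset (Fin m), ∑ i ∈ I, a' i =
            (∑ i ∈ I, a i.castSucc) + (if j ∈ I then a ℓ else 0) := by
          intro I
          rw [Finset.sum_congr rfl (fun i _ => ha'i i), sum_add_distrib,
            sum_ite_eq' I j (fun _ => a ℓ)]
        have htot : ∑ i, a' i = ∑ i, a i := by
          rw [hsum' univ, if_pos (mem_univ j), Fin.sum_univ_castSucc (f := a)]
        have hI' : ∀ I : Finset (Fin m), I.Nonempty → I ≠ univ →
            Int.gcd (∑ i ∈ I, a' i) n = 1 := by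
          intro I hne hproper
          set I' : Finset (Fin (m+1)) :=
            I.image Fin.castSucc ∪ (if j ∈ I then {ℓ} else ∅) with hI'def
          have hdisj : Disjoint (I.image Fin.castSucc)
              ((if j ∈ I then {ℓ} else ∅) : Finset (Fin (m+1))) := by
            rw [disjoint_right]
            intro x hx
            by_cases h : j ∈ I
            · rw [if_pos h, mem_singleton] at hx
              subst hx
              simp only [mem_image, not_exists, not_and]
              intro y _
              intro hy
              have := congrArg Fin.val hy
              simp [hldef] at this
              omega
            · rw [if_neg h] at hx; exact absurd hx (notMem_empty x)
          have hsumI' : ∑ i ∈ I', a i = ∑ i ∈ I, a' i := by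
            rw [hI'def, sum_union hdisj,
              sum_image (fun x _ y _ h => Fin.castSucc_injective m h), hsum']
            congr 1
            by_cases h : j ∈ I <;> simp [h]
          have hne' : I'.Nonempty := by
            obtain ⟨i, hi⟩ := hne
            exact ⟨Fin.castSucc i, mem_union_left _ (mem_image_of_mem _ hi)⟩
          have hproper' : I' ≠ univ := by
            obtain ⟨i₀, hi₀⟩ : ∃ i₀ : Fin m, i₀ ∉ I := by
              by_contra h; push_neg at h
              exact hproper (eq_univ_iff_forall.mpr h)
            intro h
            have hmem : Fin.castSucc i₀ ∈ I' := h ▸ mem_univ _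
            rw [hI'def, mem_union] at hmem
            rcases hmem with h1 | h1
            · rw [mem_image] at h1; obtain ⟨y, hy, hyy⟩ := h1
              exact hi₀ ((Fin.castSucc_injective m hyy) ▸ hy)
            · by_cases h2 : j ∈ I
              · rw [if_pos h2, mem_singleton] at h1
                have h3 := congrArg Fin.val h1
                have h4 := i₀.isLt
                simp [hldef] at h3
                omega
              · rw [if_neg h2] at h1; exact notMem_empty _ h1
          have := hI I' hne' hproper'
          rwa [hsumI'] at this
        have hb' : (Int.gcd (∑ i, a' i) n : ℤ) ∣ b := by rw [htot]; exact hb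
        have hIH := IH n hn hm a' b hI' hb'
        have hzsum : ∀ x' : Fin m → ZMod n, ∑ i, (a' i : ZMod n) * x' i =
            (∑ i : Fin m, (a i.castSucc : ZMod n) * x' i) + (a ℓ : ZMod n) * x' j := by
          intro x'
          have hterm : ∀ i, (a' i : ZMod n) * x' i =
              (a i.castSucc : ZMod n) * x' i +
                (if i = j then (a ℓ : ZMod n) * x' i else 0) := by
            intro i; by_cases h : i = j
            · subst h; rw [if_pos rfl, ha'i, if_pos rfl]; push_cast; ring
            · rw [if_neg h, ha'i, if_neg h, add_zero, add_zero]
          rw [Finset.sum_congr rfl (fun i _ => hterm i), sum_add_distrib,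
            sum_ite_eq' univ j (fun i => (a ℓ : ZMod n) * x' i), if_pos (mem_univ j)]
        have hcardj : (Fj j).card = Nat.card {x' : Fin m → ZMod n //
            ∑ i, (a' i : ZMod n) * x' i = (b : ZMod n) ∧ Function.Injective x'} := by
          rw [Nat.card_eq_fintype_card, Fintype.card_subtype]
          apply card_nbij' (fun x => Fin.init x) (fun x' => Fin.snoc x' (x' j))
          · intro x hx
            beta_reduce
            simp only [mem_coe, hFj, mem_filter] at hx
            rw [mem_coe, mem_filter]
            refine ⟨mem_univ _, ?_, hx.2.2.1⟩
            rw [hzsum]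
            simp only [hinit]
            rw [hx.2.2.2, ← hsum]
            exact hx.2.1
          · intro x' hx'
            beta_reduce
            rw [mem_coe, mem_filter] at hx'
            rw [mem_coe, hFj, mem_filter]
            refine ⟨mem_univ _, ?_, ?_, ?_⟩
            · rw [hsum]
              simp only [hldef, Fin.snoc_castSucc, Fin.snoc_last]
              rw [← hzsum]
              exact hx'.2.1
            · rw [Fin.init_snoc]; exact hx'.2.2
            · rw [Fin.snoc_castSucc]
              rw [hldef, Fin.snoc_last]
          · intro x hx
            beta_reduce
            simp only [mem_coe, hFj, mem_filter] at hx
            have h5 : Fin.init x j = x ℓ := hx.2.2.2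
            rw [h5, hldef, Fin.snoc_init_self]
          · intro x' hx'
            beta_reduce
            rw [Fin.init_snoc]
        rw [hcardj, hIH, htot]
      -- final arithmetic
      have hgoal : (Nat.card {x : Fin (m+1) → ZMod n //
          ∑ i, (a i : ZMod n) * x i = (b : ZMod n) ∧ Function.Injective x}) = Fsol.card := by
        rw [Nat.card_eq_fintype_card, Fintype.card_subtype]
      rw [hgoal]
      have hFsolcard : (Fsol.card : ℤ) = (n.descFactorial m : ℤ)
          - (m : ℤ) * ((-1) ^ (m - 1) * (Nat.factorial (m - 1) : ℤ) *
            ((Int.gcd (∑ i, a i) n : ℤ) - 1) +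
          ∏ t ∈ Finset.range (m - 1), ((n : ℤ) - (t + 1))) := by
        have h1 : (F0.card : ℤ) = (Fsol.card : ℤ) + ∑ j : Fin m, ((Fj j).card : ℤ) := by
          rw [claimB]; push_cast; ring
        rw [Finset.sum_congr rfl (fun j _ => claimC j), sum_const, card_univ,
          Fintype.card_fin, nsmul_eq_mul] at h1
        rw [← claimA]
        linarith
      rw [hFsolcard]
      exact final_arith n m hm _

theorem stmt_5 (k n : ℕ) (hn : 1 ≤ n) (hk : 1 ≤ k) (a : Fin k → ℤ) (b : ℤ)
    (hI : ∀ I : Finset (Fin k), I.Nonempty → I ≠ Finset.univ →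
      Int.gcd (∑ i ∈ I, a i) n = 1)
    (hb : (Int.gcd (∑ i, a i) n : ℤ) ∣ b) :
    (Nat.card {x : Fin k → ZMod n //
        ∑ i, (a i : ZMod n) * x i = (b : ZMod n) ∧ Function.Injective x} : ℤ) =
      (-1) ^ (k - 1) * (Nat.factorial (k - 1) : ℤ) * ((Int.gcd (∑ i, a i) n : ℤ) - 1) +
        ∏ j ∈ Finset.range (k - 1), ((n : ℤ) - (j + 1)) := by
  exact main_count k n hn hk a b hI hb
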